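/- Let G be a finite simple connected graph with vertex set V and let p : V → V ∪ {⊥} assign to each vertex a parent (with p(r) = ⊥ for exactly one vertex r, and p(v) a neighbor of v in G for all v ≠ r). Suppose there exist functions id : V → ℕ and d : V → ℕ such that: every vertex has the same value of id (equal to id(r)); d(r) = 0; and for every v ≠ r, d(v) = d(p(v)) + 1. Then the digraph with edge set {(v, p(v)) : v ≠ r} is a spanning tree of G rooted at r (i.e., the underlying graph {{v, p(v)} : v ≠ r} is a spanning tree of G). -/

import Mathlib

open SimpleGraph

/-- `T` is a spanning tree of `G`. -/
def IsSpanningTree {V : Type*} (G T : SimpleGraph V) : Prop :=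
  T ≤ G ∧ T.IsTree

/-- The 1-factor induced by a parent assignment `p : V → Option V`:
the simple graph with edge set `{{v, p v} : p v ≠ none}`. -/
def parentGraph {V : Type*} (p : V → Option V) : SimpleGraph V :=
  SimpleGraph.fromEdgeSet {e | ∃ v u, p v = some u ∧ e = s(v, u)}

lemma parentGraph_adj {V : Type*} (p : V → Option V) {x y : V} :
    (parentGraph p).Adj x y ↔ ((p x = some y ∨ p y = some x) ∧ x ≠ y) := by
  constructor
  · rintro ⟨⟨v, u, hpv, he⟩, hne⟩
    refine ⟨?_, hne⟩
    rw [Sym2.eq_iff] at he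
    rcases he with ⟨rfl, rfl⟩ | ⟨rfl, rfl⟩
    · exact Or.inl hpv
    · exact Or.inr hpv
  · rintro ⟨h | h, hne⟩
    · exact ⟨⟨x, y, h, rfl⟩, hne⟩
    · exact ⟨⟨y, x, h, Sym2.eq_swap⟩, hne⟩

/-- Soundness of the distance-based proof-labeling scheme for spanning trees:
if `p` is a parent assignment on a finite connected graph `G` with a unique root `r`
(`p r = ⊥`, and `p v` a `G`-neighbor of `v` for `v ≠ r`), and there are labels
`id, d : V → ℕ` such that all vertices carry the same `id` value, `d r = 0`, and
`d v = d (p v) + 1` for every `v ≠ r`, then the parent edges form a spanning tree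
of `G` (rooted at `r`). -/
theorem distance_labels_give_spanning_tree {V : Type*} [Fintype V]
    (G : SimpleGraph V) (hG : G.Connected)
    (p : V → Option V) (r : V)
    (hroot : p r = none)
    (hnbr : ∀ v, v ≠ r → ∃ u, p v = some u ∧ G.Adj v u)
    (idl d : V → ℕ)
    (hid : ∀ v, idl v = idl r)
    (hd0 : d r = 0)
    (hd : ∀ v, v ≠ r → ∀ u, p v = some u → d v = d u + 1) :
    IsSpanningTree G (parentGraph p) := by
  classical
  have hvr : ∀ {v u : V}, p v = some u → v ≠ r := by
    rintro v u h rfl; rw [hroot] at h; cases h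
  have hdsucc : ∀ {v u : V}, p v = some u → d v = d u + 1 := by
    intro v u h; exact hd v (hvr h) u h
  have horient : ∀ {x y : V}, (parentGraph p).Adj x y → d y ≤ d x → p x = some y := by
    intro x y hxy hle
    rcases (parentGraph_adj p).mp hxy with ⟨h | h, _⟩
    · exact h
    · exfalso; have := hdsucc h; omega
  have hle : parentGraph p ≤ G := by
    intro x y hxy
    rcases (parentGraph_adj p).mp hxy with ⟨h | h, hne⟩
    · obtain ⟨u, hu, hadj⟩ := hnbr x (hvr h)
      rw [h] at hu
      have : y = u := by injection hu
      subst this; exact hadj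
    · obtain ⟨u, hu, hadj⟩ := hnbr y (hvr h)
      rw [h] at hu
      have : x = u := by injection hu
      subst this; exact hadj.symm
  refine ⟨hle, ?_, ?_⟩
  · -- connectedness
    have hreach : ∀ n v, d v = n → (parentGraph p).Reachable v r := by
      intro n
      induction n using Nat.strong_induction_on with
      | _ n ih =>
        intro v hv
        by_cases hvr' : v = r
        · subst hvr'; exact SimpleGraph.Reachable.refl _
        · obtain ⟨u, hu, _⟩ := hnbr v hvr'
          have hdv : d v = d u + 1 := hdsucc hu
          have hadj : (parentGraph p).Adj v u := by
            rw [parentGraph_adj]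
            exact ⟨Or.inl hu, fun h => by subst h; omega⟩
          exact hadj.reachable.trans (ih (d u) (by omega) u rfl)
    have : Nonempty V := ⟨r⟩
    exact SimpleGraph.Connected.mk
      (fun a b => (hreach (d a) a rfl).trans (hreach (d b) b rfl).symm)
  · -- acyclicity
    intro v c hc
    obtain ⟨m, hm, hmax⟩ := c.support.toFinset.exists_max_image d
      ⟨v, by simp [SimpleGraph.Walk.start_mem_support]⟩
    rw [List.mem_toFinset] at hm
    have hmax' : ∀ x ∈ c.support, d x ≤ d m := fun x hx =>
      hmax x (List.mem_toFinset.mpr hx)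
    have hc' := hc.rotate hm
    set c' : (parentGraph p).Walk m m := c.rotate m hm with hc'def
    have hmem : ∀ x, x ≠ m → x ∈ c'.support → d x ≤ d m := by
      intro x hxm hx
      have h1 : x ∈ c'.support.tail := by
        rw [c'.support_eq_cons] at hx
        rcases List.mem_cons.mp hx with rfl | h
        · exact absurd rfl hxm
        · exact h
      have h2 : x ∈ c.support.tail := ((c.support_rotate m hm).mem_iff).mp h1
      exact hmax' x (List.mem_of_mem_tail h2)
    -- destructure the rotated cycle
    obtain ⟨b, hadjb, q, hq⟩ := SimpleGraph.Walk.not_nil_iff.mp hc'.not_nil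
    rw [hq] at hc'
    rw [SimpleGraph.Walk.cons_isCycle_iff] at hc'
    obtain ⟨hqpath, hqe⟩ := hc'
    -- last edge of q
    have hqrev : ¬ q.reverse.Nil := SimpleGraph.Walk.not_nil_of_ne hadjb.ne
    obtain ⟨b2, hadj2, q2, hq2⟩ := SimpleGraph.Walk.not_nil_iff.mp hqrev
    have hedge : s(m, b2) ∈ q.edges := by
      have : s(m, b2) ∈ q.reverse.edges := by
        rw [hq2, SimpleGraph.Walk.edges_cons]; exact List.mem_cons_self
      rwa [SimpleGraph.Walk.edges_reverse, List.mem_reverse] at this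
    have hb2supp : b2 ∈ q.support := q.snd_mem_support_of_mem_edges hedge
    have hbmem : b ∈ c'.support := by
      rw [hq, SimpleGraph.Walk.support_cons]
      exact List.mem_cons_of_mem _ q.start_mem_support
    have hb2mem : b2 ∈ c'.support := by
      rw [hq, SimpleGraph.Walk.support_cons]
      exact List.mem_cons_of_mem _ hb2supp
    have hpb : p m = some b := horient hadjb (hmem b hadjb.ne' hbmem)
    have hpb2 : p m = some b2 := horient hadj2 (hmem b2 hadj2.ne' hb2mem)
    have : b = b2 := by rw [hpb] at hpb2; injection hpb2
    subst this
    exact hqe hedge
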